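/- The number of involutions of {1,...,n} avoiding the pattern 321 equals the central binomial coefficient C(n, ⌊n/2⌋). -/

import Mathlib

inductive St : Type
  | U | D | F
deriving DecidableEq

open St

def G : ℕ → ℕ → ℕ
  | 0, 0 => 1
  | 0, _+1 => 0
  | n+1, 0 => G n 1 + G n 0
  | n+1, h+1 => G n (h+2) + G n h

def Wd : ℕ → ℕ → Finset (List St)
  | 0, 0 => {[]}
  | 0, _+1 => ∅
  | n+1, 0 => (Wd n 1).image (List.cons U) ∪ (Wd n 0).image (List.cons F)
  | n+1, h+1 => (Wd n (h+2)).image (List.cons U) ∪ (Wd n h).image (List.cons D)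

lemma card_Wd : ∀ n h, (Wd n h).card = G n h := by
  intro n
  induction n with
  | zero => intro h; cases h <;> simp [Wd, G]
  | succ n ih =>
    intro h
    have hinj : ∀ a : St, Function.Injective (List.cons a) := by
      intro a x y hxy; simpa using hxy
    cases h with
    | zero =>
      rw [Wd, Finset.card_union_of_disjoint, Finset.card_image_of_injective _ (hinj U),
        Finset.card_image_of_injective _ (hinj F), ih, ih, G]
      · simp only [Finset.disjoint_left, Finset.mem_image]
        rintro x ⟨u, -, rfl⟩ ⟨v, -, h⟩
        simp at h
      
    | succ h =>
      rw [Wd, Finset.card_union_of_disjoint, Finset.card_image_of_injective _ (hinj U),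
        Finset.card_image_of_injective _ (hinj D), ih, ih, G]
      · simp only [Finset.disjoint_left, Finset.mem_image]
        rintro x ⟨u, -, rfl⟩ ⟨v, -, h⟩
        simp at h

lemma G_eq : ∀ n h, G n h = if h ≤ n then Nat.choose n ((n - h) / 2) else 0 := by
  intro n
  induction n with
  | zero => intro h; cases h <;> simp [G]
  | succ n ih =>
    intro h
    cases h with
    | zero =>
      rw [G, ih, ih]
      simp only [if_pos (by omega : 1 ≤ n + 1 ∨ True), if_pos (Nat.zero_le n),
        if_pos (Nat.zero_le (n+1))]
      rcases Nat.even_or_odd n with ⟨m, hm⟩ | ⟨m, hm⟩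
      · rcases Nat.eq_zero_or_pos m with rfl | hpos
        · subst hm; simp
        · obtain ⟨m', rfl⟩ := Nat.exists_eq_add_of_lt hpos
          subst hm
          rw [if_pos (by omega)]
          have h1 : (0 + m' + 1 + (0 + m' + 1) - 1) / 2 = m' := by omega
          have h2 : (0 + m' + 1 + (0 + m' + 1) - 0) / 2 = m' + 1 := by omega
          have h3 : (0 + m' + 1 + (0 + m' + 1) + 1 - 0) / 2 = m' + 1 := by omega
          rw [h1, h2, h3]
          have : 0 + m' + 1 + (0 + m' + 1) + 1 = (0 + m' + 1 + (0 + m' + 1)) + 1 := by omega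
          rw [this, Nat.choose_succ_succ]
      · subst hm
        rw [if_pos (by omega)]
        have h1 : (2 * m + 1 - 1) / 2 = m := by omega
        have h2 : (2 * m + 1 - 0) / 2 = m := by omega
        have h3 : (2 * m + 1 + 1 - 0) / 2 = m + 1 := by omega
        rw [h1, h2, h3]
        have : 2 * m + 1 + 1 = (2 * m + 1) + 1 := by omega
        rw [this, Nat.choose_succ_succ, Nat.choose_symm_half]
    | succ h =>
      rw [G, ih, ih]
      rcases Nat.lt_or_ge n h with hlt | hge
      · rw [if_neg (by omega), if_neg (by omega), if_neg (by omega)]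
      rcases Nat.eq_or_lt_of_le hge with rfl | hlt
      · rw [if_neg (by omega), if_pos le_rfl, if_pos (by omega)]
        have h2 : (h - h) / 2 = 0 := by omega
        have h3 : (h + 1 - (h + 1)) / 2 = 0 := by omega
        rw [h2, h3]; simp
      rcases Nat.eq_or_lt_of_le hlt with rfl | hlt2
      · rw [if_neg (by omega), if_pos (by omega), if_pos (by omega)]
        have h2 : (h + 1 - h) / 2 = 0 := by omega
        have h3 : (h + 1 + 1 - (h + 1)) / 2 = 0 := by omega
        rw [h2, h3]; simp
      · -- h + 2 ≤ n
        rw [if_pos (by omega), if_pos (by omega), if_pos (by omega)]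
        have h2 : (n - h) / 2 = (n - (h + 2)) / 2 + 1 := by omega
        have h3 : (n + 1 - (h + 1)) / 2 = (n - (h + 2)) / 2 + 1 := by omega
        rw [h2, h3, Nat.choose_succ_succ]

lemma G_zero (n : ℕ) : G n 0 = Nat.choose n (n / 2) := by
  rw [G_eq, if_pos (Nat.zero_le n)]
  simp

def Cond (h : ℕ) (w : List St) : Prop :=
  (∀ k, ((w.take k).count D) ≤ h + (w.take k).count U) ∧
  w.count D = h + w.count U ∧
  ∀ k, w[k]? = some F → (w.take k).count D = h + (w.take k).count U

lemma cond_nil (h : ℕ) : Cond h [] ↔ h = 0 := by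
  unfold Cond
  simp
  omega

lemma cond_cons_U (h : ℕ) (w : List St) : Cond h (U :: w) ↔ Cond (h+1) w := by
  unfold Cond
  constructor
  · rintro ⟨p, t, f⟩
    refine ⟨fun k => ?_, ?_, fun k hk => ?_⟩
    · have := p (k+1); simp [List.count_cons] at this; omega
    · simp [List.count_cons] at t; omega
    · have := f (k+1) (by simpa using hk)
      simp [List.count_cons] at this; omega
  · rintro ⟨p, t, f⟩
    refine ⟨fun k => ?_, ?_, fun k hk => ?_⟩
    · cases k with
      | zero => simp
      | succ k => have := p k; simp [List.count_cons]; omega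
    · simp [List.count_cons]; omega
    · cases k with
      | zero => simp at hk
      | succ k =>
        have := f k (by simpa using hk)
        simp [List.count_cons]; omega

lemma cond_cons_D (h : ℕ) (w : List St) : Cond (h+1) (D :: w) ↔ Cond h w := by
  unfold Cond
  constructor
  · rintro ⟨p, t, f⟩
    refine ⟨fun k => ?_, ?_, fun k hk => ?_⟩
    · have := p (k+1); simp [List.count_cons] at this; omega
    · simp [List.count_cons] at t; omega
    · have := f (k+1) (by simpa using hk)
      simp [List.count_cons] at this; omega
  · rintro ⟨p, t, f⟩
    refine ⟨fun k => ?_, ?_, fun k hk => ?_⟩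
    · cases k with
      | zero => simp
      | succ k => have := p k; simp [List.count_cons]; omega
    · simp [List.count_cons]; omega
    · cases k with
      | zero => simp at hk
      | succ k =>
        have := f k (by simpa using hk)
        simp [List.count_cons]; omega

lemma cond_cons_D0 (w : List St) : ¬ Cond 0 (D :: w) := by
  rintro ⟨p, -, -⟩
  have := p 1
  simp [List.count_cons] at this

lemma cond_cons_F (h : ℕ) (w : List St) : Cond h (F :: w) ↔ (h = 0 ∧ Cond 0 w) := by
  constructor
  · intro hc
    have h0 : h = 0 := by
      have := hc.2.2 0 (by simp)
      simpa using this.symm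
    subst h0
    obtain ⟨p, t, f⟩ := hc
    refine ⟨rfl, fun k => ?_, ?_, fun k hk => ?_⟩
    · have := p (k+1); simp [List.count_cons] at this; omega
    · simp [List.count_cons] at t; omega
    · have := f (k+1) (by simpa using hk)
      simp [List.count_cons] at this; omega
  · rintro ⟨rfl, p, t, f⟩
    refine ⟨fun k => ?_, ?_, fun k hk => ?_⟩
    · cases k with
      | zero => simp
      | succ k => have := p k; simp [List.count_cons]; omega
    · simp [List.count_cons]; omega
    · cases k with
      | zero => simp
      | succ k =>
        have := f k (by simpa using hk)
        simp [List.count_cons]; omega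

lemma mem_Wd_iff : ∀ n h w, w ∈ Wd n h ↔ w.length = n ∧ Cond h w := by
  intro n
  induction n with
  | zero =>
    intro h w
    cases h with
    | zero =>
      simp only [Wd, Finset.mem_singleton]
      constructor
      · rintro rfl; exact ⟨rfl, (cond_nil 0).mpr rfl⟩
      · rintro ⟨hl, -⟩; exact List.eq_nil_of_length_eq_zero hl
    | succ h =>
      simp only [Wd, Finset.notMem_empty, false_iff]
      rintro ⟨hl, hc⟩
      rw [List.eq_nil_of_length_eq_zero hl] at hc
      exact Nat.succ_ne_zero h ((cond_nil _).mp hc)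
  | succ n ih =>
    intro h w
    cases w with
    | nil =>
      cases h <;>
      · simp only [Wd, Finset.mem_union, Finset.mem_image]
        constructor
        · rintro (⟨x, -, hx⟩ | ⟨x, -, hx⟩) <;> simp at hx
        · rintro ⟨hl, -⟩; simp at hl
    | cons a w' =>
      have hlen : (a :: w').length = n + 1 ↔ w'.length = n := by simp
      cases h with
      | zero =>
        simp only [Wd, Finset.mem_union, Finset.mem_image]
        cases a with
        | U =>
          rw [hlen, cond_cons_U, ← ih 1 w']
          constructor
          · rintro (⟨x, hx, he⟩ | ⟨x, hx, he⟩)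
            · obtain rfl : x = w' := by simpa using he
              exact hx
            · simp at he
          · intro hx; exact Or.inl ⟨w', hx, rfl⟩
        | D =>
          constructor
          · rintro (⟨x, -, hx⟩ | ⟨x, -, hx⟩) <;> simp at hx
          · rintro ⟨-, hc⟩; exact absurd hc (cond_cons_D0 w')
        | F =>
          rw [hlen, cond_cons_F]
          constructor
          · rintro (⟨x, hx, he⟩ | ⟨x, hx, he⟩)
            · simp at he
            · obtain rfl : x = w' := by simpa using he
              exact ⟨((ih 0 x).mp hx).1, rfl, ((ih 0 x).mp hx).2⟩
          · rintro ⟨h1, -, h2⟩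
            exact Or.inr ⟨w', (ih 0 w').mpr ⟨h1, h2⟩, rfl⟩
      | succ h =>
        simp only [Wd, Finset.mem_union, Finset.mem_image]
        cases a with
        | U =>
          rw [hlen, cond_cons_U, ← ih (h+2) w']
          constructor
          · rintro (⟨x, hx, he⟩ | ⟨x, hx, he⟩)
            · obtain rfl : x = w' := by simpa using he
              exact hx
            · simp at he
          · intro hx; exact Or.inl ⟨w', hx, rfl⟩
        | D =>
          rw [hlen, cond_cons_D, ← ih h w']
          constructor
          · rintro (⟨x, hx, he⟩ | ⟨x, hx, he⟩)
            · simp at he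
            · obtain rfl : x = w' := by simpa using he
              exact hx
          · intro hx; exact Or.inr ⟨w', hx, rfl⟩
        | F =>
          constructor
          · rintro (⟨x, -, hx⟩ | ⟨x, -, hx⟩) <;> simp at hx
          · rintro ⟨-, hc⟩
            exact absurd ((cond_cons_F _ _).mp hc).1 (Nat.succ_ne_zero h)

lemma list_count_eq_sum (l : List St) (x : St) :
    l.count x = (l.map (fun a => if a = x then 1 else 0)).sum := by
  induction l with
  | nil => simp
  | cons a l ih =>
    by_cases h : a = x <;> simp [List.count_cons, ih, h] <;> omega

lemma count_take_ofFn {n : ℕ} (L : Fin n → St) (x : St) (k : ℕ) :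
    ((List.ofFn L).take k).count x
      = (Finset.univ.filter fun j : Fin n => j.val < k ∧ L j = x).card := by
  rw [list_count_eq_sum]
  rw [show (((List.ofFn L).take k).map (fun a => if a = x then 1 else 0))
      = (List.ofFn fun j => if L j = x then (1:ℕ) else 0).take k by
    simp [List.map_take, List.map_ofFn]; rfl]
  rw [List.sum_take_ofFn, Finset.card_filter, Finset.sum_filter]
  refine Finset.sum_congr rfl fun j _ => ?_
  by_cases h1 : j.val < k <;> by_cases h2 : L j = x <;> simp [h1, h2]

lemma count_ofFn' {n : ℕ} (L : Fin n → St) (x : St) :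
    (List.ofFn L).count x = (Finset.univ.filter fun j : Fin n => j.val < n ∧ L j = x).card := by
  rw [← count_take_ofFn L x n, List.take_of_length_le (by simp)]

lemma get?_ofFn_eq {n : ℕ} (L : Fin n → St) (k : ℕ) :
    (List.ofFn L)[k]? = some F ↔ ∃ i : Fin n, i.val = k ∧ L i = F := by
  constructor
  · intro he
    rw [List.getElem?_eq_some_iff] at he
    obtain ⟨hk, he⟩ := he
    simp only [List.length_ofFn] at hk
    exact ⟨⟨k, hk⟩, rfl, by simpa using he⟩
  · rintro ⟨i, rfl, hL⟩
    simp [hL]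

lemma le_card_filter {n m : ℕ} (S : Finset (Fin n)) (hS : S.card = m) (j : Fin m) {k : ℕ}
    (hk : (S.orderEmbOfFin hS j).val < k) :
    j.val + 1 ≤ (S.filter fun x => x.val < k).card := by
  have := Finset.card_le_card_of_injOn (fun i : Fin m => S.orderEmbOfFin hS i)
    (s := Finset.Iic j) (t := S.filter fun x => x.val < k) ?_ ?_
  · rwa [Fin.card_Iic] at this
  · intro i hi
    rw [Finset.mem_coe, Finset.mem_Iic] at hi
    refine Finset.mem_filter.mpr ⟨Finset.orderEmbOfFin_mem S hS i, ?_⟩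
    have : S.orderEmbOfFin hS i ≤ S.orderEmbOfFin hS j :=
      (S.orderEmbOfFin hS).monotone hi
    show (S.orderEmbOfFin hS i : Fin n).val < k
    omega
  · exact fun a _ b _ hab => (S.orderEmbOfFin hS).injective hab

lemma card_filter_le {n m : ℕ} (S : Finset (Fin n)) (hS : S.card = m) (j : Fin m) {k : ℕ}
    (hk : k ≤ (S.orderEmbOfFin hS j).val) :
    (S.filter fun x => x.val < k).card ≤ j.val := by
  classical
  have hsub : (S.filter fun x => x.val < k)
      ⊆ (Finset.Iio j).image (fun i : Fin m => (S.orderEmbOfFin hS i : Fin n)) := by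
    intro x hx
    rw [Finset.mem_filter] at hx
    obtain ⟨hxS, hxk⟩ := hx
    set i := (S.orderIsoOfFin hS).symm ⟨x, hxS⟩ with hi
    have hix : S.orderEmbOfFin hS i = x := by
      rw [← Finset.coe_orderIsoOfFin_apply, hi]
      simp
    have hij : i < j := by
      by_contra hc
      push_neg at hc
      have : S.orderEmbOfFin hS j ≤ S.orderEmbOfFin hS i :=
        (S.orderEmbOfFin hS).monotone hc
      rw [hix] at this
      omega
    exact Finset.mem_image.mpr ⟨i, Finset.mem_Iio.mpr hij, hix⟩
  calc (S.filter fun x => x.val < k).card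
      ≤ ((Finset.Iio j).image fun i : Fin m => (S.orderEmbOfFin hS i : Fin n)).card :=
        Finset.card_le_card hsub
    _ ≤ (Finset.Iio j).card := Finset.card_image_le
    _ = j.val := Fin.card_Iio j

def Av321 {n : ℕ} (σ : Equiv.Perm (Fin n)) : Prop :=
  ¬ ∃ i j k : Fin n, i < j ∧ j < k ∧ σ k < σ j ∧ σ j < σ i

lemma av321_iff {n : ℕ} (τ : Equiv.Perm (Fin n)) (hinv : ∀ i, τ (τ i) = i) :
    Av321 τ ↔ ((∀ i j : Fin n, i < j → i < τ i → j < τ j → τ i < τ j) ∧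
               (∀ i j : Fin n, i < j → i < τ i → τ j = j → τ i < j)) := by
  constructor
  · intro hav
    constructor
    · intro i j hij hi hj
      rcases lt_trichotomy (τ i) (τ j) with h | h | h
      · exact h
      · exact absurd (τ.injective h) hij.ne
      · exact absurd ⟨i, j, τ j, hij, hj, by rw [hinv]; exact hj, h⟩ hav
    · intro i j hij hi hfix
      rcases lt_trichotomy (τ i) j with h | h | h
      · exact h
      · exact absurd (τ.injective (h.trans hfix.symm)) hij.ne
      · refine absurd ⟨i, j, τ i, hij, h, ?_, ?_⟩ hav
        · rw [hinv, hfix]; exact hij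
        · rw [hfix]; exact h
  · rintro ⟨P1, P2⟩ ⟨i, j, k, hij, hjk, h1, h2⟩
    have mono : ∀ x y : Fin n, x < y →
        ((τ x < x ∧ τ y < y) ∨ (¬τ x < x ∧ ¬τ y < y)) → τ x < τ y := by
      rintro x y hxy (⟨hx, hy⟩ | ⟨hx, hy⟩)
      · by_contra hc
        push_neg at hc
        have hlt : τ y < τ x :=
          hc.lt_of_ne (fun he => hxy.ne (τ.injective he.symm))
        have := P1 (τ y) (τ x) hlt (by rw [hinv]; exact hy) (by rw [hinv]; exact hx)
        rw [hinv, hinv] at this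
        exact absurd this (lt_asymm hxy)
      · push_neg at hx hy
        rcases eq_or_lt_of_le hx with hfx | hex
      
        · rcases eq_or_lt_of_le hy with hfy | hey
          · rw [← hfx, ← hfy]; exact hxy
          · rw [← hfx]; exact hxy.trans_le (le_of_lt hey)
        · rcases eq_or_lt_of_le hy with hfy | hey
          · rw [← hfy]; exact P2 x y hxy hex hfy.symm
          · exact P1 x y hxy hex hey
    by_cases ci : τ i < i <;> by_cases cj : τ j < j <;> by_cases ck : τ k < k
    · exact absurd (mono i j hij (Or.inl ⟨ci, cj⟩)) (lt_asymm h2)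
    · exact absurd (mono i j hij (Or.inl ⟨ci, cj⟩)) (lt_asymm h2)
    · exact absurd (mono i k (hij.trans hjk) (Or.inl ⟨ci, ck⟩)) (lt_asymm (h1.trans h2))
    · exact absurd (mono j k hjk (Or.inr ⟨cj, ck⟩)) (lt_asymm h1)
    · exact absurd (mono j k hjk (Or.inl ⟨cj, ck⟩)) (lt_asymm h1)
    · exact absurd (mono i k (hij.trans hjk) (Or.inr ⟨ci, ck⟩)) (lt_asymm (h1.trans h2))
    · exact absurd (mono i j hij (Or.inr ⟨ci, cj⟩)) (lt_asymm h2)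
    · exact absurd (mono i j hij (Or.inr ⟨ci, cj⟩)) (lt_asymm h2)

lemma kth_lt {n m : ℕ} (A B : Finset (Fin n)) (hA : A.card = m) (hB : B.card = m)
    (hd : ∀ x ∈ A, x ∉ B)
    (hpre : ∀ k : ℕ, (B.filter fun x => x.val < k).card ≤ (A.filter fun x => x.val < k).card)
    (j : Fin m) : A.orderEmbOfFin hA j < B.orderEmbOfFin hB j := by
  by_contra hc
  push_neg at hc
  have hne : B.orderEmbOfFin hB j ≠ A.orderEmbOfFin hA j := by
    intro he
    exact hd _ (Finset.orderEmbOfFin_mem A hA j) (he ▸ Finset.orderEmbOfFin_mem B hB j)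
  have hba : B.orderEmbOfFin hB j < A.orderEmbOfFin hA j := lt_of_le_of_ne hc hne
  rw [Fin.lt_def] at hba
  have h1 := le_card_filter B hB j (k := (B.orderEmbOfFin hB j).val + 1) (by omega)
  have h2 := card_filter_le A hA j (k := (B.orderEmbOfFin hB j).val + 1) (by omega)
  have := hpre ((B.orderEmbOfFin hB j).val + 1)
  omega

lemma kth_lt_fixed {n m : ℕ} (A B : Finset (Fin n)) (hA : A.card = m) (hB : B.card = m)
    (j : Fin m) (fpt : Fin n)
    (heq : (B.filter fun x => x.val < fpt.val).card = (A.filter fun x => x.val < fpt.val).card)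
    (hja : A.orderEmbOfFin hA j < fpt) : B.orderEmbOfFin hB j < fpt := by
  by_contra hc
  push_neg at hc
  rw [Fin.le_def] at hc
  rw [Fin.lt_def] at hja
  have h1 := le_card_filter A hA j (k := fpt.val) (by omega)
  have h2 := card_filter_le B hB j (k := fpt.val) (by omega)
  omega

def code {n : ℕ} (τ : Equiv.Perm (Fin n)) (i : Fin n) : St :=
  if τ i = i then F else if i < τ i then U else D

lemma code_eq_U {n : ℕ} (τ : Equiv.Perm (Fin n)) (i : Fin n) :
    code τ i = U ↔ i < τ i := by
  unfold code
  split_ifs with h1 h2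
  · simp [h1]
  · simp [h2]
  · simp [h2]

lemma code_eq_D {n : ℕ} (τ : Equiv.Perm (Fin n)) (i : Fin n) :
    code τ i = D ↔ τ i < i := by
  unfold code
  split_ifs with h1 h2
  · simp [h1]
  · simp [lt_asymm h2]
  · simp only [true_iff]
    rcases lt_trichotomy i (τ i) with h | h | h
    · exact absurd h h2
    · exact absurd h.symm h1
    · exact h

lemma code_eq_F {n : ℕ} (τ : Equiv.Perm (Fin n)) (i : Fin n) :
    code τ i = F ↔ τ i = i := by
  unfold code
  split_ifs with h1 h2
  · simp [h1]
  · simp [h1]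
  · simp [h1]

def uC {n : ℕ} (L : Fin n → St) (k : ℕ) : ℕ :=
  (Finset.univ.filter fun j : Fin n => j.val < k ∧ L j = U).card

def dC {n : ℕ} (L : Fin n → St) (k : ℕ) : ℕ :=
  (Finset.univ.filter fun j : Fin n => j.val < k ∧ L j = D).card

def FCond {n : ℕ} (L : Fin n → St) : Prop :=
  (∀ k : ℕ, dC L k ≤ uC L k) ∧ dC L n = uC L n ∧
    ∀ i : Fin n, L i = F → dC L i.val = uC L i.val

lemma cond_ofFn_iff {n : ℕ} (L : Fin n → St) : Cond 0 (List.ofFn L) ↔ FCond L := by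
  unfold Cond FCond uC dC
  simp only [count_take_ofFn, count_ofFn', zero_add, get?_ofFn_eq]
  constructor
  · rintro ⟨p, t, f⟩
    exact ⟨p, t, fun i hi => f i.val ⟨i, rfl, hi⟩⟩
  · rintro ⟨p, t, f⟩
    refine ⟨p, t, fun k hk => ?_⟩
    obtain ⟨i, rfl, hi⟩ := hk
    exact f i hi

lemma fcond_code {n : ℕ} (τ : Equiv.Perm (Fin n)) (hinv : ∀ i, τ (τ i) = i)
    (P2 : ∀ i j : Fin n, i < j → i < τ i → τ j = j → τ i < j) : FCond (code τ) := by
  have hDU : ∀ k : ℕ, dC (code τ) k ≤ uC (code τ) k := by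
    intro k
    apply Finset.card_le_card_of_injOn τ
    · intro a ha
      rw [Finset.mem_coe, Finset.mem_filter] at ha
      obtain ⟨-, hak, haD⟩ := ha
      rw [code_eq_D] at haD
      refine Finset.mem_filter.mpr ⟨Finset.mem_univ _, ?_, ?_⟩
      · have := haD
        rw [Fin.lt_def] at this
        omega
      · rw [code_eq_U, hinv]
        exact haD
    · exact fun a _ b _ hab => τ.injective hab
  have hUD : ∀ k : ℕ, (∀ a : Fin n, a.val < k → a < τ a → (τ a).val < k) →
      uC (code τ) k ≤ dC (code τ) k := by
    intro k hcl
    apply Finset.card_le_card_of_injOn τ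
    · intro a ha
      rw [Finset.mem_coe, Finset.mem_filter] at ha
      obtain ⟨-, hak, haU⟩ := ha
      rw [code_eq_U] at haU
      refine Finset.mem_filter.mpr ⟨Finset.mem_univ _, hcl a hak haU, ?_⟩
      rw [code_eq_D, hinv]
      exact haU
    · exact fun a _ b _ hab => τ.injective hab
  refine ⟨hDU, ?_, ?_⟩
  · exact le_antisymm (hDU n) (hUD n fun a _ _ => (τ a).isLt)
  · intro i hF
    rw [code_eq_F] at hF
    refine le_antisymm (hDU i.val) (hUD i.val fun a hak haU => ?_)
    have hai : a < i := by rw [Fin.lt_def]; omega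
    have := P2 a i hai haU hF
    rw [Fin.lt_def] at this
    omega

lemma orderEmb_surj {n m : ℕ} (S : Finset (Fin n)) (h : S.card = m) (i : Fin n) (hi : i ∈ S) :
    ∃ j : Fin m, S.orderEmbOfFin h j = i :=
  ⟨(S.orderIsoOfFin h).symm ⟨i, hi⟩, by
    rw [← Finset.coe_orderIsoOfFin_apply]
    exact congrArg Subtype.val ((S.orderIsoOfFin h).apply_symm_apply ⟨i, hi⟩)⟩

lemma exists_perm_of_fcond {n : ℕ} (L : Fin n → St) (hFC : FCond L) :
    ∃ τ : Equiv.Perm (Fin n), (∀ i, τ (τ i) = i) ∧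
      (∀ i j : Fin n, i < j → i < τ i → j < τ j → τ i < τ j) ∧
      (∀ i j : Fin n, i < j → i < τ i → τ j = j → τ i < j) ∧
      code τ = L := by
  classical
  obtain ⟨hpre0, htot, hfix⟩ := hFC
  set A : Finset (Fin n) := Finset.univ.filter (fun j : Fin n => L j = U) with hAdef
  set B : Finset (Fin n) := Finset.univ.filter (fun j : Fin n => L j = D) with hBdef
  have hu : ∀ k : ℕ, uC L k = (A.filter fun x => x.val < k).card := by
    intro k
    unfold uC
    congr 1
    rw [hAdef, Finset.filter_filter]
    ext x
    simp only [Finset.mem_filter, Finset.mem_univ, true_and]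
    tauto
  have hd : ∀ k : ℕ, dC L k = (B.filter fun x => x.val < k).card := by
    intro k
    unfold dC
    congr 1
    rw [hBdef, Finset.filter_filter]
    ext x
    simp only [Finset.mem_filter, Finset.mem_univ, true_and]
    tauto
  have hfull : ∀ S : Finset (Fin n), S.filter (fun x => x.val < n) = S :=
    fun S => Finset.filter_true_of_mem (fun x _ => x.isLt)
  have hBA : B.card = A.card := by
    have h1 := htot
    rw [hu n, hd n, hfull A, hfull B] at h1
    exact h1
  have hdisj : ∀ x ∈ A, x ∉ B := by
    intro x hx hxB
    rw [hAdef, Finset.mem_filter] at hx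
    rw [hBdef, Finset.mem_filter] at hxB
    rw [hx.2] at hxB
    cases hxB.2
  have hpre : ∀ k : ℕ, (B.filter fun x => x.val < k).card ≤ (A.filter fun x => x.val < k).card :=
    fun k => by rw [← hu, ← hd]; exact hpre0 k
  have hkth : ∀ j : Fin A.card, A.orderEmbOfFin rfl j < B.orderEmbOfFin hBA j :=
    kth_lt A B rfl hBA hdisj hpre
  set eA := A.orderEmbOfFin rfl with heA
  set eB := B.orderEmbOfFin hBA with heB
  set isoA := A.orderIsoOfFin rfl with hisoA
  set isoB := B.orderIsoOfFin hBA with hisoB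
  have hcoeA : ∀ j, (isoA j : Fin n) = eA j := fun j => rfl
  have hcoeB : ∀ j, (isoB j : Fin n) = eB j := fun j => rfl
  set f : Fin n → Fin n := fun i =>
    if h : i ∈ A then eB (isoA.symm ⟨i, h⟩)
    else if h : i ∈ B then eA (isoB.symm ⟨i, h⟩) else i with hfdef
  have hfa : ∀ (i : Fin n) (h : i ∈ A), f i = eB (isoA.symm ⟨i, h⟩) := by
    intro i h
    rw [hfdef]
    simp only [dif_pos h]
  have hfb : ∀ (i : Fin n) (h : i ∈ B), f i = eA (isoB.symm ⟨i, h⟩) := by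
    intro i h
    rw [hfdef]
    simp only [dif_neg (fun hA => hdisj i hA h), dif_pos h]
  have hfo : ∀ (i : Fin n), i ∉ A → i ∉ B → f i = i := by
    intro i h1 h2
    rw [hfdef]
    simp only [dif_neg h1, dif_neg h2]
  have hAval : ∀ (i : Fin n) (h : i ∈ A), eA (isoA.symm ⟨i, h⟩) = i := by
    intro i h
    rw [← hcoeA]
    exact congrArg Subtype.val (isoA.apply_symm_apply ⟨i, h⟩)
  have hBval : ∀ (i : Fin n) (h : i ∈ B), eB (isoB.symm ⟨i, h⟩) = i := by
    intro i h
    rw [← hcoeB]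
    exact congrArg Subtype.val (isoB.apply_symm_apply ⟨i, h⟩)
  have hAmem : ∀ j, eA j ∈ A := fun j => Finset.orderEmbOfFin_mem A rfl j
  have hBmem : ∀ j, eB j ∈ B := fun j => Finset.orderEmbOfFin_mem B hBA j
  have hAidx : ∀ j, isoA.symm ⟨eA j, hAmem j⟩ = j := by
    intro j
    apply isoA.injective
    rw [OrderIso.apply_symm_apply]
    exact Subtype.ext (hcoeA j).symm
  have hBidx : ∀ j, isoB.symm ⟨eB j, hBmem j⟩ = j := by
    intro j
    apply isoB.injective
    rw [OrderIso.apply_symm_apply]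
    exact Subtype.ext (hcoeB j).symm
  have hff : Function.Involutive f := by
    intro i
    by_cases hA : i ∈ A
    · rw [hfa i hA, hfb _ (hBmem _), hBidx, hAval]
    · by_cases hB : i ∈ B
      · rw [hfb i hB, hfa _ (hAmem _), hAidx, hBval]
      · rw [hfo i hA hB, hfo i hA hB]
  set τ : Equiv.Perm (Fin n) := hff.toPerm f with hτdef
  have hτ : ∀ i, τ i = f i := fun i => rfl
  have hexA : ∀ (i : Fin n), i ∈ A → i < f i := by
    intro i h
    rw [hfa i h]
    have := hkth (isoA.symm ⟨i, h⟩)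
    rwa [hAval i h] at this
  have hexB : ∀ (i : Fin n), i ∈ B → f i < i := by
    intro i h
    rw [hfb i h]
    have := hkth (isoB.symm ⟨i, h⟩)
    rwa [hBval i h] at this
  have hclassU : ∀ i : Fin n, i < f i → i ∈ A := by
    intro i hi
    by_contra hA
    by_cases hB : i ∈ B
    · exact absurd (hexB i hB) (lt_asymm hi)
    · rw [hfo i hA hB] at hi
      exact lt_irrefl i hi
  have hLF : ∀ i : Fin n, i ∉ A → i ∉ B → L i = F := by
    intro i h1 h2
    rw [hAdef, Finset.mem_filter] at h1
    rw [hBdef, Finset.mem_filter] at h2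
    cases hLi : L i
    · exact absurd ⟨Finset.mem_univ i, hLi⟩ h1
    · exact absurd ⟨Finset.mem_univ i, hLi⟩ h2
    · rfl
  refine ⟨τ, hff, ?_, ?_, ?_⟩
  · intro i j hij hi hj
    simp only [hτ] at hi hj ⊢
    have hiA := hclassU i hi
    have hjA := hclassU j hj
    rw [hfa i hiA, hfa j hjA]
    apply (B.orderEmbOfFin hBA).strictMono
    apply isoA.symm.strictMono
    exact Subtype.mk_lt_mk.mpr hij
  · intro i j hij hi hfixj
    simp only [hτ] at hi hfixj ⊢
    have hiA := hclassU i hi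
    have hjA : j ∉ A := fun h => absurd hfixj (ne_of_gt (hexA j h))
    have hjB : j ∉ B := fun h => absurd hfixj (ne_of_lt (hexB j h))
    have hLj : L j = F := hLF j hjA hjB
    have heq := hfix j hLj
    rw [hu, hd] at heq
    rw [hfa i hiA]
    apply kth_lt_fixed A B rfl hBA (isoA.symm ⟨i, hiA⟩) j heq
    rw [hAval]
    exact hij
  · funext i
    by_cases hA : i ∈ A
    · rw [(code_eq_U τ i).mpr (by rw [hτ]; exact hexA i hA)]
      rw [hAdef, Finset.mem_filter] at hA
      exact hA.2.symm
    · by_cases hB : i ∈ B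
      · rw [(code_eq_D τ i).mpr (by rw [hτ]; exact hexB i hB)]
        rw [hBdef, Finset.mem_filter] at hB
        exact hB.2.symm
      · rw [(code_eq_F τ i).mpr (by rw [hτ]; exact hfo i hA hB)]
        exact (hLF i hA hB).symm

theorem card_involutions_avoiding_321 (n : ℕ) :
    Nat.card {τ : Equiv.Perm (Fin n) // τ * τ = 1 ∧ Av321 τ} =
      Nat.choose n (n / 2) := by
  classical
  have hinv' : ∀ (τ : Equiv.Perm (Fin n)), τ * τ = 1 → ∀ i, τ (τ i) = i := by
    intro τ h i
    have := DFunLike.congr_fun h i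
    simpa [Equiv.Perm.mul_apply] using this
  have henc : ∀ τ : {τ : Equiv.Perm (Fin n) // τ * τ = 1 ∧ Av321 τ},
      List.ofFn (code τ.1) ∈ Wd n 0 := by
    rintro ⟨τ, h1, h2⟩
    rw [mem_Wd_iff]
    refine ⟨by simp, ?_⟩
    rw [cond_ofFn_iff]
    exact fcond_code τ (hinv' τ h1) ((av321_iff τ (hinv' τ h1)).mp h2).2
  let enc : {τ : Equiv.Perm (Fin n) // τ * τ = 1 ∧ Av321 τ} → {w : List St // w ∈ Wd n 0} :=
    fun τ => ⟨List.ofFn (code τ.1), henc τ⟩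
  have hbij : Function.Bijective enc := by
    constructor
    · rintro ⟨τ, hτ1, hτ2⟩ ⟨σ, hσ1, hσ2⟩ he
      have hc : code τ = code σ := by
        have : List.ofFn (code τ) = List.ofFn (code σ) := congrArg Subtype.val he
        exact List.ofFn_inj.mp this
      have hinvτ := hinv' τ hτ1
      have hinvσ := hinv' σ hσ1
      have P1τ := ((av321_iff τ hinvτ).mp hτ2).1
      have P1σ := ((av321_iff σ hinvσ).mp hσ2).1
      set A : Finset (Fin n) := Finset.univ.filter (fun i => code τ i = U) with hAdef
      set B : Finset (Fin n) := Finset.univ.filter (fun i => code τ i = D) with hBdef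
      have hmemA : ∀ i : Fin n, i ∈ A ↔ i < τ i := by
        intro i
        rw [hAdef, Finset.mem_filter, code_eq_U]
        simp
      have hmemB : ∀ i : Fin n, i ∈ B ↔ τ i < i := by
        intro i
        rw [hBdef, Finset.mem_filter, code_eq_D]
        simp
      have hmemA' : ∀ i : Fin n, i ∈ A ↔ i < σ i := by
        intro i
        rw [hAdef, hc, Finset.mem_filter, code_eq_U]
        simp
      have hmemB' : ∀ i : Fin n, i ∈ B ↔ σ i < i := by
        intro i
        rw [hBdef, hc, Finset.mem_filter, code_eq_D]
        simp
      have hBA : B.card = A.card := by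
        apply le_antisymm
        · apply Finset.card_le_card_of_injOn τ
          · intro a ha
            rw [Finset.mem_coe, hmemB] at ha
            rw [Finset.mem_coe, hmemA, hinvτ]
            exact ha
          · exact fun a _ b _ hab => τ.injective hab
        · apply Finset.card_le_card_of_injOn τ
          · intro a ha
            rw [Finset.mem_coe, hmemA] at ha
            rw [Finset.mem_coe, hmemB, hinvτ]
            exact ha
          · exact fun a _ b _ hab => τ.injective hab
      have huniq : ∀ ρ : Equiv.Perm (Fin n), (∀ i, ρ (ρ i) = i) →
          (∀ i j : Fin n, i < j → i < ρ i → j < ρ j → ρ i < ρ j) →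
          (∀ i : Fin n, i ∈ A ↔ i < ρ i) → (∀ i : Fin n, i ∈ B ↔ ρ i < i) →
          (fun j => ρ (A.orderEmbOfFin rfl j)) = B.orderEmbOfFin hBA := by
        intro ρ hre hP1 hmA hmB
        apply Finset.orderEmbOfFin_unique
        · intro j
          rw [hmB, hre]
          exact (hmA _).mp (Finset.orderEmbOfFin_mem A rfl j)
        · intro p q hpq
          have hp := (hmA _).mp (Finset.orderEmbOfFin_mem A rfl p)
          have hq := (hmA _).mp (Finset.orderEmbOfFin_mem A rfl q)
          exact hP1 _ _ ((A.orderEmbOfFin rfl).strictMono hpq) hp hq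
      have hagreeA : ∀ a ∈ A, τ a = σ a := by
        intro a ha
        obtain ⟨j, rfl⟩ := orderEmb_surj A rfl a ha
        have h1 := congrFun (huniq τ hinvτ P1τ hmemA hmemB) j
        have h2 := congrFun (huniq σ hinvσ P1σ hmemA' hmemB') j
        rw [h1, h2]
      apply Subtype.ext
      apply Equiv.ext
      intro i
      by_cases hA : i ∈ A
      · exact hagreeA i hA
      · by_cases hB : i ∈ B
        · have hτiA : τ i ∈ A := by
            rw [hmemA, hinvτ]
            exact (hmemB i).mp hB
          have h1 : σ (τ i) = i := by
            rw [← hagreeA _ hτiA, hinvτ]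
          calc τ i = σ (σ (τ i)) := (hinvσ (τ i)).symm
            _ = σ i := by rw [h1]
        · have h1 : τ i = i := by
            rcases lt_trichotomy (τ i) i with h | h | h
            · exact absurd ((hmemB i).mpr h) hB
            · exact h
            · exact absurd ((hmemA i).mpr h) hA
          have h2 : σ i = i := by
            rcases lt_trichotomy (σ i) i with h | h | h
            · exact absurd ((hmemB' i).mpr h) hB
            · exact h
            · exact absurd ((hmemA' i).mpr h) hA
          rw [h1, h2]
    · rintro ⟨w, hw⟩
      rw [mem_Wd_iff] at hw
      obtain ⟨hlen, hcond⟩ := hw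
      obtain ⟨L, rfl⟩ : ∃ L : Fin n → St, w = List.ofFn L := by
        refine ⟨fun i => w.get (Fin.cast hlen.symm i), ?_⟩
        apply List.ext_get (by simp [hlen])
        intro k h1 h2
        rw [List.get_ofFn]
        congr 1
      rw [cond_ofFn_iff] at hcond
      obtain ⟨τ, hτinv, hP1, hP2, hcode⟩ := exists_perm_of_fcond L hcond
      have hmul : τ * τ = 1 := by
        apply Equiv.ext
        intro i
        simp [Equiv.Perm.mul_apply, hτinv i]
      have hav : Av321 τ := (av321_iff τ hτinv).mpr ⟨hP1, hP2⟩
      refine ⟨⟨τ, hmul, hav⟩, ?_⟩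
      apply Subtype.ext
      show List.ofFn (code τ) = List.ofFn L
      rw [hcode]
  calc Nat.card {τ : Equiv.Perm (Fin n) // τ * τ = 1 ∧ Av321 τ}
      = Nat.card {w : List St // w ∈ Wd n 0} := Nat.card_congr (Equiv.ofBijective enc hbij)
    _ = (Wd n 0).card := Nat.card_eq_finsetCard _
    _ = G n 0 := card_Wd n 0
    _ = Nat.choose n (n / 2) := G_zero n
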